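/- The number of subgroups of ℤ² of index m (equivalently, sublattices of ℤ² of determinant m) equals σ(m) = ∑_{n | m} n, the sum of divisors of m. -/

import Mathlib

/-- The sublattice with Hermite-style basis `(a, b), (0, d)`. -/
def LL (a b d : ℤ) : AddSubgroup (ℤ × ℤ) where
  carrier := {p | a ∣ p.1 ∧ a * d ∣ a * p.2 - b * p.1}
  zero_mem' := by simp
  add_mem' := by
    rintro p q ⟨h1, h2⟩ ⟨h3, h4⟩
    refine ⟨dvd_add h1 h3, ?_⟩
    have := dvd_add h2 h4
    convert this using 1
    · exact rfl
    simp [Prod.fst_add, Prod.snd_add]; ring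
  neg_mem' := by
    rintro p ⟨h1, h2⟩
    refine ⟨h1.neg_right, ?_⟩
    have := h2.neg_right
    convert this using 1
    · exact rfl
    simp; ring

lemma mem_LL {a b d : ℤ} {p : ℤ × ℤ} :
    p ∈ LL a b d ↔ a ∣ p.1 ∧ a * d ∣ a * p.2 - b * p.1 := Iff.rfl

/-- Homomorphism to detect the first-coordinate condition. -/
def kHom (n : ℕ) : ℤ × ℤ →+ ZMod n where
  toFun p := (p.1 : ZMod n)
  map_zero' := by simp
  map_add' p q := by push_cast [Prod.fst_add]; ring

def gHom (b : ℤ) (n : ℕ) : ℤ × ℤ →+ ZMod n where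
  toFun p := ((p.2 - b * p.1 : ℤ) : ZMod n)
  map_zero' := by simp
  map_add' p q := by push_cast [Prod.fst_add, Prod.snd_add]; ring

lemma index_LL (a b d : ℤ) (ha : a ≠ 0) (hd : d ≠ 0) :
    (LL a b d).index = a.natAbs * d.natAbs := by
  haveI : NeZero a.natAbs := ⟨Int.natAbs_ne_zero.mpr ha⟩
  haveI : NeZero d.natAbs := ⟨Int.natAbs_ne_zero.mpr hd⟩
  set K := (kHom a.natAbs).ker with hK
  have hLK : LL a b d ≤ K := by
    rintro p ⟨h1, h2⟩
    simp only [hK, AddMonoidHom.mem_ker, kHom, AddMonoidHom.coe_mk, ZeroHom.coe_mk,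
      ZMod.intCast_zmod_eq_zero_iff_dvd, Int.natAbs_dvd]
    exact h1
  have hKindex : K.index = a.natAbs := by
    rw [hK, AddSubgroup.index_ker]
    have hsurj : Function.Surjective (kHom a.natAbs) := by
      intro z
      obtain ⟨x, hx⟩ := ZMod.intCast_surjective (n := a.natAbs) z
      exact ⟨(x, 0), hx⟩
    rw [AddMonoidHom.range_eq_top.mpr hsurj]
    rw [Nat.card_congr AddSubgroup.topEquiv.toEquiv, Nat.card_zmod]
  -- the hom `f : (s, y) ↦ (a*s, y)` with range `K`
  set f : ℤ × ℤ →+ ℤ × ℤ :=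
    { toFun := fun p => (a * p.1, p.2)
      map_zero' := by simp
      map_add' := by intro p q; simp [Prod.ext_iff]; ring } with hf
  have hrange : f.range = K := by
    ext p
    simp only [AddMonoidHom.mem_range, hK, AddMonoidHom.mem_ker, kHom, hf,
      AddMonoidHom.coe_mk, ZeroHom.coe_mk, ZMod.intCast_zmod_eq_zero_iff_dvd, Int.natAbs_dvd]
    constructor
    · rintro ⟨q, rfl⟩; exact Dvd.intro _ rfl
    · rintro ⟨c, hc⟩; exact ⟨(c, p.2), by simp [Prod.ext_iff, hc]⟩
  have hcomap : (LL a b d).comap f = (gHom b d.natAbs).ker := by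
    ext p
    simp only [AddSubgroup.mem_comap, mem_LL, hf, AddMonoidHom.coe_mk, ZeroHom.coe_mk,
      AddMonoidHom.mem_ker, gHom, ZMod.intCast_zmod_eq_zero_iff_dvd, Int.natAbs_dvd]
    constructor
    · rintro ⟨-, h2⟩
      have : a * d ∣ a * (p.2 - b * p.1) := by convert h2 using 1; ring
      exact (mul_dvd_mul_iff_left ha).mp this
    · intro h
      refine ⟨Dvd.intro _ rfl, ?_⟩
      have := mul_dvd_mul_left a h
      convert this using 1
      · exact rfl
      ring
  have hginj : (gHom b d.natAbs).ker.index = d.natAbs := by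
    rw [AddSubgroup.index_ker]
    have hsurj : Function.Surjective (gHom b d.natAbs) := by
      intro z
      obtain ⟨x, hx⟩ := ZMod.intCast_surjective (n := d.natAbs) z
      exact ⟨(0, x), by simp [gHom, hx]⟩
    rw [AddMonoidHom.range_eq_top.mpr hsurj]
    rw [Nat.card_congr AddSubgroup.topEquiv.toEquiv, Nat.card_zmod]
  have hrel : (LL a b d).relIndex K = d.natAbs := by
    rw [← hrange, ← AddSubgroup.index_comap, hcomap, hginj]
  have := AddSubgroup.relIndex_mul_index hLK
  rw [hrel, hKindex] at this
  rw [← this, mul_comm]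

lemma LL_congr {a b b' d : ℤ} (h : d ∣ b - b') : LL a b d = LL a b' d := by
  have key : ∀ b b' : ℤ, d ∣ b - b' → ∀ p : ℤ × ℤ, p ∈ LL a b d → p ∈ LL a b' d := by
    rintro c c' hcc' p ⟨h1, h2⟩
    refine ⟨h1, ?_⟩
    obtain ⟨e, he⟩ := hcc'
    obtain ⟨s, hs⟩ := h1
    have : a * p.2 - c' * p.1 = (a * p.2 - c * p.1) + (a * d) * (e * s) := by
      rw [hs]; linear_combination (a * s) * he
    rw [this]
    exact dvd_add h2 (Dvd.intro _ rfl)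
  ext p
  exact ⟨key b b' h p, key b' b (dvd_sub_comm.mp h) p⟩

lemma zero_mem_LL {a b d y : ℤ} (ha : a ≠ 0) : ((0 : ℤ), y) ∈ LL a b d ↔ d ∣ y := by
  simp only [mem_LL, mul_zero, sub_zero, dvd_zero, true_and]
  exact mul_dvd_mul_iff_left ha

lemma ab_mem_LL {a b d : ℤ} : (a, b) ∈ LL a b d := ⟨dvd_refl a, by simp [mul_comm]⟩

/-- The number of subgroups of `ℤ²` of index `m` equals the sum of the divisors of `m`. -/
theorem stmt_15 (m : ℕ) (hm : 0 < m) :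
    Nat.card {Λ : AddSubgroup (ℤ × ℤ) // Λ.index = m} = ∑ n ∈ m.divisors, n := by
  classical
  -- the parametrization
  have Fidx : ∀ (d : ℕ) (hd : d ∈ m.divisors) (b : ℕ),
      (LL ((m / d : ℕ) : ℤ) (b : ℤ) (d : ℤ)).index = m := by
    intro d hd b
    obtain ⟨hdvd, hm0⟩ := Nat.mem_divisors.mp hd
    have hd0 : d ≠ 0 := by rintro rfl; simp at hdvd; omega
    have ha0 : m / d ≠ 0 := Nat.div_ne_zero_iff.mpr ⟨hd0, Nat.le_of_dvd hm hdvd⟩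
    rw [index_LL _ _ _ (by exact_mod_cast ha0) (by exact_mod_cast hd0)]
    simp only [Int.natAbs_natCast]
    exact Nat.div_mul_cancel hdvd
  set F : (Σ d : m.divisors, Fin d) → {Λ : AddSubgroup (ℤ × ℤ) // Λ.index = m} :=
    fun x => ⟨LL ((m / x.1.1 : ℕ) : ℤ) (x.2.1 : ℤ) (x.1.1 : ℤ), Fidx x.1.1 x.1.2 x.2.1⟩ with hF
  have hbij : Function.Bijective F := by
    constructor
    · rintro ⟨⟨d, hd⟩, b⟩ ⟨⟨d', hd'⟩, b'⟩ h
      simp only [hF, Subtype.mk.injEq] at h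
      have hdn0 : d ≠ 0 := (Nat.pos_of_mem_divisors hd).ne'
      have hdn0' : d' ≠ 0 := (Nat.pos_of_mem_divisors hd').ne'
      have hd0 : (d : ℤ) ≠ 0 := by exact_mod_cast hdn0
      have hd0' : (d' : ℤ) ≠ 0 := by exact_mod_cast hdn0'
      have ha0 : ((m / d : ℕ) : ℤ) ≠ 0 := by
        exact_mod_cast Nat.div_ne_zero_iff.mpr
          ⟨hdn0, Nat.le_of_dvd hm (Nat.mem_divisors.mp hd).1⟩
      have ha0' : ((m / d' : ℕ) : ℤ) ≠ 0 := by
        exact_mod_cast Nat.div_ne_zero_iff.mpr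
          ⟨hdn0', Nat.le_of_dvd hm (Nat.mem_divisors.mp hd').1⟩
      -- recover d
      have hdd' : d = d' := by
        have h1 : ((0 : ℤ), (d : ℤ)) ∈ LL ((m / d : ℕ) : ℤ) (b : ℤ) (d : ℤ) :=
          (zero_mem_LL ha0).mpr dvd_rfl
        rw [h] at h1
        have h2 : ((0 : ℤ), (d' : ℤ)) ∈ LL ((m / d : ℕ) : ℤ) (b : ℤ) (d : ℤ) := by
          rw [h]; exact (zero_mem_LL ha0').mpr dvd_rfl
        have hdd1 : (d' : ℤ) ∣ (d : ℤ) := (zero_mem_LL ha0').mp h1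
        have hdd2 : (d : ℤ) ∣ (d' : ℤ) := (zero_mem_LL ha0).mp h2
        exact_mod_cast Int.dvd_antisymm (by positivity) (by positivity) hdd2 hdd1
      subst hdd'
      -- recover b
      have hbb' : (b : Fin d) = b' := by
        have h1 : (((m / d : ℕ) : ℤ), (b : ℤ)) ∈ LL ((m / d : ℕ) : ℤ) (b : ℤ) (d : ℤ) :=
          ab_mem_LL
        rw [h] at h1
        obtain ⟨-, h2⟩ := h1
        have hdvd : (d : ℤ) ∣ ((b : ℤ) - (b' : ℤ)) := by
          have : ((m / d : ℕ) : ℤ) * (d : ℤ) ∣ ((m / d : ℕ) : ℤ) * ((b : ℤ) - (b' : ℤ)) := by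
            convert h2 using 1; push_cast; ring
          exact (mul_dvd_mul_iff_left ha0).mp this
        have hb1 : ((b : ℤ) - (b' : ℤ)) = 0 := by
          refine Int.eq_zero_of_abs_lt_dvd hdvd ?_
          have : (b : ℤ) < d := by exact_mod_cast b.2
          have : (b' : ℤ) < d := by exact_mod_cast b'.2
          have hb0 : (0 : ℤ) ≤ (b : ℤ) := by positivity
          have hb0' : (0 : ℤ) ≤ (b' : ℤ) := by positivity
          rw [abs_lt]; omega
        ext
        exact_mod_cast sub_eq_zero.mp hb1
      simp [hbb']
    · rintro ⟨Λ, hΛ⟩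
      haveI hfi : Λ.FiniteIndex := ⟨by omega⟩
      -- (m, 0) and (0, m) are in Λ
      have hm10 : ((m : ℤ), (0 : ℤ)) ∈ Λ := by
        have := Λ.nsmul_index_mem ((1 : ℤ), (0 : ℤ))
        rwa [hΛ, show m • ((1 : ℤ), (0 : ℤ)) = ((m : ℤ), (0 : ℤ)) by simp] at this
      have hm01 : ((0 : ℤ), (m : ℤ)) ∈ Λ := by
        have := Λ.nsmul_index_mem ((0 : ℤ), (1 : ℤ))
        rwa [hΛ, show m • ((0 : ℤ), (1 : ℤ)) = ((0 : ℤ), (m : ℤ)) by simp] at this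
      -- the projection subgroup
      obtain ⟨g0, hA⟩ := Int.subgroup_cyclic (Λ.map (AddMonoidHom.fst ℤ ℤ))
      have hAmem : ∀ x : ℤ, x ∈ Λ.map (AddMonoidHom.fst ℤ ℤ) ↔ g0 ∣ x := by
        intro x
        rw [hA, ← AddSubgroup.zmultiples_eq_closure, Int.mem_zmultiples_iff]
      obtain ⟨h0, hD⟩ := Int.subgroup_cyclic (Λ.comap (AddMonoidHom.inr ℤ ℤ))
      have hDmem : ∀ y : ℤ, ((0 : ℤ), y) ∈ Λ ↔ h0 ∣ y := by
        intro y
        rw [show (((0 : ℤ), y) ∈ Λ) ↔ y ∈ Λ.comap (AddMonoidHom.inr ℤ ℤ) from Iff.rfl,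
          hD, ← AddSubgroup.zmultiples_eq_closure, Int.mem_zmultiples_iff]
      set a := g0.natAbs with haDef
      set d := h0.natAbs with hdDef
      have hg0 : g0 ≠ 0 := by
        intro h0'
        have : (m : ℤ) ∈ Λ.map (AddMonoidHom.fst ℤ ℤ) :=
          ⟨((m : ℤ), (0 : ℤ)), hm10, rfl⟩
        rw [hAmem, h0'] at this
        simp at this; omega
      have hh0 : h0 ≠ 0 := by
        intro h0'
        have := (hDmem (m : ℤ)).mp hm01
        rw [h0'] at this
        simp at this; omega
      have ha0 : (a : ℤ) ≠ 0 := Int.natCast_ne_zero.mpr (Int.natAbs_ne_zero.mpr hg0)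
      have hd0 : (d : ℤ) ≠ 0 := Int.natCast_ne_zero.mpr (Int.natAbs_ne_zero.mpr hh0)
      -- get b
      have haA : (a : ℤ) ∈ Λ.map (AddMonoidHom.fst ℤ ℤ) := (hAmem _).mpr (Int.dvd_natAbs.mpr dvd_rfl)
      obtain ⟨p, hpΛ, hp1⟩ := haA
      have hp1' : p.1 = (a : ℤ) := hp1
      have hΛeq : Λ = LL (a : ℤ) p.2 (d : ℤ) := by
        ext q
        constructor
        · intro hq
          have hq1 : (a : ℤ) ∣ q.1 :=
            Int.natAbs_dvd.mpr ((hAmem q.1).mp ⟨q, hq, rfl⟩)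
          obtain ⟨s, hs⟩ := hq1
          have hsub : q - s • p ∈ Λ := Λ.sub_mem hq (Λ.zsmul_mem hpΛ s)
          have hfst : (q - s • p).1 = 0 := by
            simp [Prod.fst_sub, hp1', hs, mul_comm]
          have hsnd : ((0 : ℤ), q.2 - s * p.2) ∈ Λ := by
            have : (q - s • p) = ((0 : ℤ), q.2 - s * p.2) := by
              ext
              · exact hfst
              · simp [Prod.snd_sub, mul_comm]
            rwa [this] at hsub
          have hd2 : (d : ℤ) ∣ q.2 - s * p.2 :=
            Int.natAbs_dvd.mpr ((hDmem _).mp hsnd)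
          refine ⟨⟨s, hs⟩, ?_⟩
          have : (a : ℤ) * q.2 - p.2 * q.1 = (a : ℤ) * (q.2 - s * p.2) := by rw [hs]; ring
          rw [this]
          exact mul_dvd_mul_left _ hd2
        · rintro ⟨⟨s, hs⟩, h2⟩
          have hd2 : (d : ℤ) ∣ q.2 - s * p.2 := by
            have : (a : ℤ) * (d : ℤ) ∣ (a : ℤ) * (q.2 - s * p.2) := by
              convert h2 using 1; rw [hs]; ring
            exact (mul_dvd_mul_iff_left ha0).mp this
          have h0mem : ((0 : ℤ), q.2 - s * p.2) ∈ Λ := (hDmem _).mpr (Int.natAbs_dvd.mp hd2)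
          have : q = s • p + ((0 : ℤ), q.2 - s * p.2) := by
            ext
            · simp [hp1', hs, mul_comm]
            · simp
          rw [this]
          exact Λ.add_mem (Λ.zsmul_mem hpΛ s) h0mem
      -- compute the index
      have hmad : m = a * d := by
        rw [← hΛ, hΛeq, index_LL _ _ _ ha0 hd0]
        simp
      have hddvd : d ∈ m.divisors := Nat.mem_divisors.mpr ⟨⟨a, by rw [hmad, mul_comm]⟩, hm.ne'⟩
      have hdpos : 0 < d := by positivity
      -- reduce b mod d
      set b' := p.2 % (d : ℤ) with hb'
      have hb'0 : 0 ≤ b' := Int.emod_nonneg _ hd0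
      have hb'lt : b' < (d : ℤ) := Int.emod_lt_of_pos _ (by exact_mod_cast hdpos)
      have hcong : LL (a : ℤ) p.2 (d : ℤ) = LL (a : ℤ) b' (d : ℤ) :=
        LL_congr ⟨p.2 / (d : ℤ), by
          rw [hb']; have := Int.emod_add_mul_ediv p.2 (d : ℤ); omega⟩
      refine ⟨⟨⟨d, hddvd⟩, ⟨b'.toNat, ?_⟩⟩, ?_⟩
      · have h1 : (b'.toNat : ℤ) < (d : ℤ) := by
          rw [Int.toNat_of_nonneg hb'0]; exact hb'lt
        exact_mod_cast h1
      · apply Subtype.ext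
        simp only [hF]
        have hmd : m / d = a := by rw [hmad, Nat.mul_div_cancel _ hdpos]
        rw [hmd, hΛeq, hcong]
        congr 1
        exact Int.toNat_of_nonneg hb'0
  rw [Nat.card_congr (Equiv.ofBijective F hbij).symm, Nat.card_eq_fintype_card,
    Fintype.card_sigma]
  simp only [Fintype.card_fin]
  exact Finset.sum_coe_sort m.divisors id
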